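/- arXiv:2505.10374 — 2 statements merged into one kernel-verified Lean document; each statement's English description precedes it below -/
import Mathlib

section
/- An object W of the category S of sequences of k-vector spaces is an injective object of S if and only if the transition map d_W^i : W^i → W^{i+1} is surjective for every i ∈ ℤ. -/
open CategoryTheory CategoryTheory.Limits

/-- The category `S` of sequences of `k`-vector spaces: functors from `ℤ`
(viewed as a poset category) to `k`-vector spaces.  Explicitly, an object `V`
consists of `k`-vector spaces `V.obj i` for all `i : ℤ` together with transition
maps `V.obj i ⟶ V.obj (i+1)` (with no condition on composites), and a morphism
is a family of linear maps commuting with the transition maps. -/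
abbrev SeqCat (k : Type) [Field k] := ℤ ⥤ ModuleCat k

variable {k : Type} [Field k]

/-- The transition map `d_V^i : V^i ⟶ V^{i+1}` of a sequence `V`. -/
noncomputable def SeqCat.d (V : SeqCat k) (i : ℤ) : V.obj i ⟶ V.obj (i + 1) :=
  V.map (homOfLE (by omega))


namespace SeqAux

open Submodule

lemma map_map (V : SeqCat k) {a b c : ℤ} (hab : a ≤ b) (hbc : b ≤ c) (x : V.obj a) :
    V.map (homOfLE hbc) (V.map (homOfLE hab) x) = V.map (homOfLE (hab.trans hbc)) x := by
  show (V.map (homOfLE hab) ≫ V.map (homOfLE hbc)) x = _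
  rw [← Functor.map_comp]
  rfl

lemma map_id_apply (V : SeqCat k) (a : ℤ) (x : V.obj a) :
    V.map (homOfLE (le_refl a)) x = x := by
  rw [show homOfLE (le_refl a) = 𝟙 a from rfl, V.map_id]
  rfl

lemma d_apply (V : SeqCat k) (i : ℤ) (x : V.obj i) :
    V.d i x = V.map (homOfLE (by omega : i ≤ i + 1)) x := rfl

lemma d_map (V : SeqCat k) {a b : ℤ} (hab : a ≤ b) (x : V.obj a) :
    V.d b (V.map (homOfLE hab) x) = V.map (homOfLE (by omega : a ≤ b + 1)) x :=
  map_map V hab (by omega) x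

lemma surj_iter {W : SeqCat k} (hW : ∀ i : ℤ, Function.Surjective (W.d i))
    {a b : ℤ} (hab : a ≤ b) : Function.Surjective (W.map (homOfLE hab)) := by
  have H : ∀ h : a ≤ b, Function.Surjective (W.map (homOfLE h)) := by
    refine Int.le_induction (motive := fun c _ => ∀ h : a ≤ c, Function.Surjective (W.map (homOfLE h))) ?_ ?_ b hab
    · intro h x
      exact ⟨x, map_id_apply W a x⟩
    · intro n hn ih h x
      obtain ⟨y, hy⟩ := hW n x
      obtain ⟨z, hz⟩ := ih hn y
      exact ⟨z, by rw [← d_map W hn, hz, hy]⟩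
  exact H hab

end SeqAux

namespace SeqAux

open Submodule

universe u

/-- The submodule family defining the "ray" sequence supported on `[i, ∞)`. -/

def raySub (i j : ℤ) : Submodule k (ULift.{u} k) := if i ≤ j then ⊤ else ⊥

lemma raySub_mono (i : ℤ) {a b : ℤ} (hab : a ≤ b) :
    raySub.{u} (k := k) i a ≤ raySub i b := by
  unfold raySub
  by_cases h : i ≤ a
  · rw [if_pos h, if_pos (h.trans hab)]
  · rw [if_neg h]
    exact bot_le

/-- The "ray" sequence: `k` in degrees `≥ i` with identity transitions, `0` below. -/
def ray (i : ℤ) : SeqCat k where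
  obj j := ModuleCat.of k (raySub.{u} (k := k) i j)
  map {a b} φ := ModuleCat.ofHom (Submodule.inclusion (raySub_mono i (leOfHom φ)))
  map_id a := by
    ext x
    rfl
  map_comp {a b c} φ ψ := by
    ext x
    rfl

end SeqAux

namespace SeqAux

open Submodule

lemma raySub_le (i j : ℤ) : raySub.{u} (k := k) (i+1) j ≤ raySub i j := by
  unfold raySub
  by_cases h : i + 1 ≤ j
  · rw [if_pos h, if_pos (by omega)]
  · rw [if_neg h]
    exact bot_le

/-- The inclusion of the ray at `i+1` into the ray at `i`. -/
def rayIncl (i : ℤ) : ray.{u} (k := k) (i+1) ⟶ ray i where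
  app j := ModuleCat.ofHom (Submodule.inclusion (raySub_le i j))
  naturality := by
    intros a b φ
    ext x
    rfl

instance rayIncl_mono (i : ℤ) : Mono (rayIncl.{u} (k := k) i) := by
  have : ∀ (X : ℤ), Mono ((rayIncl.{u} (k := k) i).app X) := by
    intro j
    rw [ModuleCat.mono_iff_injective]
    exact Submodule.inclusion_injective (raySub_le.{u} i j)
  exact NatTrans.mono_of_mono_app _

/-- Target elements for the morphism from the ray at `i+1` to `W` hitting `w`. -/
noncomputable def rayTgt (W : SeqCat k) (i : ℤ) (w : W.obj (i+1)) (j : ℤ) : W.obj j :=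
  if h : i + 1 ≤ j then W.map (homOfLE h) w else 0

/-- The morphism from the ray at `i+1` to `W` sending the canonical generator to `w`. -/
noncomputable def rayHom (W : SeqCat k) (i : ℤ) (w : W.obj (i+1)) :
    ray.{u} (k := k) (i+1) ⟶ W where
  app j := ModuleCat.ofHom ((LinearMap.toSpanSingleton k (W.obj j) (rayTgt W i w j)).comp
      ((ULift.moduleEquiv (R := k) (M := k)).toLinearMap.comp (raySub.{u} (k := k) (i+1) j).subtype))
  naturality := by
    intro a b φ
    ext x
    obtain ⟨xv, hxv⟩ := x
    show xv.down • rayTgt W i w b = W.map φ (xv.down • rayTgt W i w a)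
    rw [map_smul]
    by_cases h : i + 1 ≤ a
    · have hb : i + 1 ≤ b := h.trans (leOfHom φ)
      unfold rayTgt
      rw [dif_pos h, dif_pos hb]
      rw [show φ = homOfLE (leOfHom φ) from rfl, map_map]
    · have hx : xv = 0 := by
        unfold raySub at hxv
        rw [if_neg h] at hxv
        simpa using hxv
      rw [hx]
      simp

lemma surj_of_injective (W : SeqCat.{u} k) (hW : Injective W) (i : ℤ) :
    Function.Surjective (W.d i) := by
  intro w
  obtain ⟨h, fac⟩ := hW.factors (rayHom W i w) (rayIncl i)
  have mem1 : (ULift.up (1 : k)) ∈ raySub.{u} (k := k) i i := by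
    unfold raySub
    rw [if_pos le_rfl]
    trivial
  refine ⟨h.app i ⟨ULift.up 1, mem1⟩, ?_⟩
  have mem2 : (ULift.up (1 : k)) ∈ raySub.{u} (k := k) i (i+1) := by
    unfold raySub
    rw [if_pos (by omega)]
    trivial
  have mem3 : (ULift.up (1 : k)) ∈ raySub.{u} (k := k) (i+1) (i+1) := by
    unfold raySub
    rw [if_pos le_rfl]
    trivial
  have hnat := h.naturality (homOfLE (by omega : i ≤ i + 1))
  have h1 : W.d i (h.app i ⟨ULift.up 1, mem1⟩)
      = h.app (i+1) ((ray.{u} (k := k) i).map (homOfLE (by omega : i ≤ i + 1)) ⟨ULift.up 1, mem1⟩) := by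
    show (h.app i ≫ W.map (homOfLE (by omega : i ≤ i + 1))) _ = _
    rw [← hnat]
    rfl
  rw [h1]
  have h2 : (ray.{u} (k := k) i).map (homOfLE (by omega : i ≤ i + 1)) ⟨ULift.up 1, mem1⟩
      = (rayIncl.{u} (k := k) i).app (i+1) ⟨ULift.up 1, mem3⟩ := rfl
  rw [h2]
  have h3 : ((rayIncl.{u} (k := k) i) ≫ h).app (i+1) ⟨ULift.up 1, mem3⟩
      = (rayHom W i w).app (i+1) ⟨ULift.up 1, mem3⟩ := by rw [fac]
  have h4 : (rayHom W i w).app (i+1) ⟨ULift.up 1, mem3⟩ = w := by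
    show (1 : k) • rayTgt W i w (i+1) = w
    unfold rayTgt
    rw [dif_pos (le_refl (i+1)), one_smul, map_id_apply]
  rw [← h4, ← h3]
  rfl

end SeqAux

namespace SeqAux.Backward

open Submodule

variable {W X Y : SeqCat.{u} k} (g : X ⟶ Y) (f : X ⟶ W)

/-- The predicate saying that a family of partial linear maps `Y^j →ₗ. W^j` is a
partial extension of `f` along `g` compatible with the transition maps. -/
structure Good (h : ∀ j : ℤ, Y.obj j →ₗ.[k] W.obj j) : Prop where
  mem_range : ∀ (j : ℤ) (x : X.obj j), g.app j x ∈ (h j).domain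
  map_range : ∀ (j : ℤ) (x : X.obj j) (hm : g.app j x ∈ (h j).domain),
      h j ⟨g.app j x, hm⟩ = f.app j x
  mem_step : ∀ (j : ℤ) (a : Y.obj j), a ∈ (h j).domain → Y.d j a ∈ (h (j+1)).domain
  map_step : ∀ (j : ℤ) (a : Y.obj j) (ha : a ∈ (h j).domain)
      (ha' : Y.d j a ∈ (h (j+1)).domain),
      h (j+1) ⟨Y.d j a, ha'⟩ = W.d j (h j ⟨a, ha⟩)

variable {g f}

lemma Good.mem_iter {h : ∀ j : ℤ, Y.obj j →ₗ.[k] W.obj j} (hG : Good g f h)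
    {a b : ℤ} (hab : a ≤ b) (x : Y.obj a) (hx : x ∈ (h a).domain) :
    Y.map (homOfLE hab) x ∈ (h b).domain := by
  have H : ∀ hab : a ≤ b, Y.map (homOfLE hab) x ∈ (h b).domain := by
    refine Int.le_induction
      (motive := fun c _ => ∀ hac : a ≤ c, Y.map (homOfLE hac) x ∈ (h c).domain) ?_ ?_ b hab
    · intro hc
      rw [map_id_apply]
      exact hx
    · intro n hn ih hc
      have := hG.mem_step n _ (ih hn)
      rw [d_map] at this
      exact this
  exact H hab

lemma Good.map_iter {h : ∀ j : ℤ, Y.obj j →ₗ.[k] W.obj j} (hG : Good g f h)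
    {a b : ℤ} (hab : a ≤ b) (x : Y.obj a) (hx : x ∈ (h a).domain)
    (hx' : Y.map (homOfLE hab) x ∈ (h b).domain) :
    h b ⟨Y.map (homOfLE hab) x, hx'⟩ = W.map (homOfLE hab) (h a ⟨x, hx⟩) := by
  have H : ∀ (hab : a ≤ b) (hx' : Y.map (homOfLE hab) x ∈ (h b).domain),
      h b ⟨Y.map (homOfLE hab) x, hx'⟩ = W.map (homOfLE hab) (h a ⟨x, hx⟩) := by
    refine Int.le_induction (motive := fun c _ => ∀ (hac : a ≤ c)
      (hx' : Y.map (homOfLE hac) x ∈ (h c).domain),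
      h c ⟨Y.map (homOfLE hac) x, hx'⟩ = W.map (homOfLE hac) (h a ⟨x, hx⟩)) ?_ ?_ b hab
    · intro hc hx'
      have e1 : (⟨Y.map (homOfLE hc) x, hx'⟩ : (h a).domain) = ⟨x, hx⟩ :=
        Subtype.ext (map_id_apply Y a x)
      rw [e1, map_id_apply]
    · intro n hn ih hc hx'
      have hmem : Y.map (homOfLE hn) x ∈ (h n).domain := hG.mem_iter hn x hx
      have hmem' : Y.d n (Y.map (homOfLE hn) x) ∈ (h (n+1)).domain := hG.mem_step n _ hmem
      have e1 : (⟨Y.map (homOfLE hc) x, hx'⟩ : (h (n+1)).domain)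
          = ⟨Y.d n (Y.map (homOfLE hn) x), hmem'⟩ := Subtype.ext (d_map Y hn x).symm
      rw [e1, hG.map_step n _ hmem hmem', ih hn hmem]
      exact d_map W hn _
  exact H hab hx'

end SeqAux.Backward

namespace SeqAux.Backward

open Submodule

variable {W X Y : SeqCat.{u} k} {g : X ⟶ Y} {f : X ⟶ W}

/-- The initial extension: `f ∘ g⁻¹` defined on the ranges of the components of `g`. -/
noncomputable def base (g : X ⟶ Y) (f : X ⟶ W) (hg : ∀ j, Function.Injective (g.app j)) :
    ∀ j : ℤ, Y.obj j →ₗ.[k] W.obj j := fun j =>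
  ⟨LinearMap.range (g.app j).hom,
    (f.app j).hom.comp
      (LinearEquiv.ofInjective (g.app j).hom (hg j)).symm.toLinearMap⟩

lemma base_apply (g : X ⟶ Y) (f : X ⟶ W) (hg : ∀ j, Function.Injective (g.app j))
    (j : ℤ) (x : X.obj j) (hm : g.app j x ∈ (base g f hg j).domain) :
    base g f hg j ⟨g.app j x, hm⟩ = f.app j x := by
  have e : (LinearEquiv.ofInjective (g.app j).hom (hg j)).symm
      ⟨g.app j x, hm⟩ = x := by
    apply (LinearEquiv.ofInjective (g.app j).hom (hg j)).injective
    rw [LinearEquiv.apply_symm_apply]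
    ext
    simp [LinearEquiv.ofInjective_apply]
  show (f.app j) ((LinearEquiv.ofInjective _ (hg j)).symm ⟨g.app j x, hm⟩) = f.app j x
  rw [e]

lemma good_base (g : X ⟶ Y) (f : X ⟶ W) (hg : ∀ j, Function.Injective (g.app j)) :
    Good g f (base g f hg) := by
  constructor
  · intro j x
    exact ⟨x, rfl⟩
  · intro j x hm
    exact base_apply g f hg j x hm
  · rintro j a ⟨x, rfl⟩
    refine ⟨X.d j x, ?_⟩
    have := g.naturality (homOfLE (by omega : j ≤ j + 1))
    show (X.map _ ≫ g.app (j+1)) x = _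
    rw [this]
    rfl
  · rintro j a ha ha'
    obtain ⟨x, rfl⟩ := ha
    have hd : Y.d j (g.app j x) = g.app (j+1) (X.d j x) := by
      have := g.naturality (homOfLE (by omega : j ≤ j + 1))
      show (g.app j ≫ Y.map _) x = _
      rw [← this]
      rfl
    have e1 : (⟨Y.d j (g.app j x), ha'⟩ : (base g f hg (j+1)).domain)
        = ⟨g.app (j+1) (X.d j x), show g.app (j+1) (X.d j x) ∈ (base g f hg (j+1)).domain from ⟨X.d j x, rfl⟩⟩ := Subtype.ext hd
    rw [e1, base_apply g f hg (j+1) (X.d j x) _, base_apply g f hg j x (show g.app j x ∈ (base g f hg j).domain from ⟨x, rfl⟩)]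
    have := f.naturality (homOfLE (by omega : j ≤ j + 1))
    show _ = (f.app j ≫ W.map _) x
    rw [← this]
    rfl

/-- Upper bounds for chains of good families. -/
lemma chain_ub (c : Set (∀ j : ℤ, Y.obj j →ₗ.[k] W.obj j))
    (hsub : ∀ h ∈ c, Good g f h) (hchain : IsChain (· ≤ ·) c)
    {y₀ : ∀ j : ℤ, Y.obj j →ₗ.[k] W.obj j} (hy₀ : y₀ ∈ c) :
    ∃ ub, Good g f ub ∧ ∀ z ∈ c, z ≤ ub := by
  have hdir : ∀ j : ℤ, DirectedOn (· ≤ ·) ((fun h => h j) '' c) := by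
    intro j
    rintro _ ⟨h₁, h₁c, rfl⟩ _ ⟨h₂, h₂c, rfl⟩
    rcases eq_or_ne h₁ h₂ with rfl | hne
    · exact ⟨h₁ j, ⟨h₁, h₁c, rfl⟩, le_rfl, le_rfl⟩
    · rcases hchain h₁c h₂c hne with hle | hle
      · exact ⟨h₂ j, ⟨h₂, h₂c, rfl⟩, hle j, le_rfl⟩
      · exact ⟨h₁ j, ⟨h₁, h₁c, rfl⟩, le_rfl, hle j⟩
  set ub : ∀ j : ℤ, Y.obj j →ₗ.[k] W.obj j :=
    fun j => LinearPMap.sSup _ (hdir j) with hub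
  have hle : ∀ h ∈ c, h ≤ ub := by
    intro h hc j
    exact LinearPMap.le_sSup (hdir j) ⟨h, hc, rfl⟩
  have hdomfind : ∀ (j : ℤ) (a : Y.obj j), a ∈ (ub j).domain →
      ∃ h ∈ c, a ∈ (h j).domain := by
    intro j a ha
    have : (ub j).domain = sSup (LinearPMap.domain '' ((fun h => h j) '' c)) := rfl
    rw [this] at ha
    have hne : (LinearPMap.domain '' ((fun h => h j) '' c)).Nonempty :=
      ⟨_, ⟨y₀ j, ⟨y₀, hy₀, rfl⟩, rfl⟩⟩
    have hdir2 : DirectedOn (· ≤ ·) (LinearPMap.domain '' ((fun h => h j) '' c)) :=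
      directedOn_image.2 ((hdir j).mono @(LinearPMap.domain_mono.monotone))
    obtain ⟨p, ⟨q, ⟨h, hc', rfl⟩, rfl⟩, hap⟩ := (Submodule.mem_sSup_of_directed hne hdir2).1 ha
    exact ⟨h, hc', hap⟩
  have happly : ∀ (h : ∀ j : ℤ, Y.obj j →ₗ.[k] W.obj j), h ∈ c → ∀ (j : ℤ) (a : Y.obj j)
      (hah : a ∈ (h j).domain) (haub : a ∈ (ub j).domain),
      ub j ⟨a, haub⟩ = h j ⟨a, hah⟩ := by
    intro h hc' j a hah haub
    exact ((hle h hc' j).2 rfl).symm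
  refine ⟨ub, ?_, hle⟩
  constructor
  · intro j x
    exact (hle y₀ hy₀ j).1 ((hsub y₀ hy₀).mem_range j x)
  · intro j x hm
    rw [happly y₀ hy₀ j _ ((hsub y₀ hy₀).mem_range j x) hm]
    exact (hsub y₀ hy₀).map_range j x _
  · intro j a ha
    obtain ⟨h, hc', hah⟩ := hdomfind j a ha
    exact (hle h hc' (j+1)).1 ((hsub h hc').mem_step j a hah)
  · intro j a ha ha'
    obtain ⟨h, hc', hah⟩ := hdomfind j a ha
    have hah' : Y.d j a ∈ (h (j+1)).domain := (hsub h hc').mem_step j a hah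
    rw [happly h hc' j a hah ha, happly h hc' (j+1) _ hah' ha']
    exact (hsub h hc').map_step j a hah hah'

end SeqAux.Backward

namespace SeqAux.Backward

open Submodule

variable {W X Y : SeqCat.{u} k} {g : X ⟶ Y} {f : X ⟶ W}

/-- Choice of a compatible value for the extension at a new element `y`. -/
lemma exists_w (hW : ∀ i : ℤ, Function.Surjective (W.d i))
    {m : ∀ j : ℤ, Y.obj j →ₗ.[k] W.obj j} (hG : Good g f m) (j : ℤ) (y : Y.obj j) :
    ∃ w : W.obj j, ∀ (l : ℤ) (hl : j ≤ l) (hm : Y.map (homOfLE hl) y ∈ (m l).domain),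
      m l ⟨Y.map (homOfLE hl) y, hm⟩ = W.map (homOfLE hl) w := by
  by_cases hL : ∃ l : ℤ, ∃ hl : j ≤ l, Y.map (homOfLE hl) y ∈ (m l).domain
  · obtain ⟨l₀, ⟨hl₀, hm₀⟩, hmin⟩ := Int.exists_least_of_bdd
      (P := fun l => ∃ hl : j ≤ l, Y.map (homOfLE hl) y ∈ (m l).domain)
      ⟨j, fun z hz => hz.1⟩ hL
    obtain ⟨w, hw⟩ := surj_iter hW hl₀ (m l₀ ⟨Y.map (homOfLE hl₀) y, hm₀⟩)
    refine ⟨w, ?_⟩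
    intro l hl hm
    have hll : l₀ ≤ l := hmin l ⟨hl, hm⟩
    have e : Y.map (homOfLE hl) y = Y.map (homOfLE hll) (Y.map (homOfLE hl₀) y) :=
      (map_map Y hl₀ hll y).symm
    have hm' : Y.map (homOfLE hll) (Y.map (homOfLE hl₀) y) ∈ (m l).domain := e ▸ hm
    have e1 : (⟨Y.map (homOfLE hl) y, hm⟩ : (m l).domain)
        = ⟨Y.map (homOfLE hll) (Y.map (homOfLE hl₀) y), hm'⟩ := Subtype.ext e
    rw [e1, hG.map_iter hll _ hm₀ hm', ← hw, map_map]
  · refine ⟨0, ?_⟩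
    intro l hl hm
    exact (hL ⟨l, hl, hm⟩).elim

end SeqAux.Backward

namespace SeqAux.Backward

open Submodule

lemma pmap_congr {R E F : Type*} [Ring R] [AddCommGroup E] [Module R E]
    [AddCommGroup F] [Module R F] {p q : E →ₗ.[R] F} (e : p = q) {x : E}
    (hx : x ∈ p.domain) (hx' : x ∈ q.domain) : p ⟨x, hx⟩ = q ⟨x, hx'⟩ := by
  subst e
  rfl

variable {W X Y : SeqCat.{u} k} {g : X ⟶ Y} {f : X ⟶ W}

lemma exists_gt (hW : ∀ i : ℤ, Function.Surjective (W.d i))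
    {m : ∀ j : ℤ, Y.obj j →ₗ.[k] W.obj j} (hG : Good g f m) (j : ℤ) (y : Y.obj j)
    (hy : y ∉ (m j).domain) :
    ∃ m' : ∀ j : ℤ, Y.obj j →ₗ.[k] W.obj j, Good g f m' ∧ m ≤ m' ∧ ¬ m' ≤ m := by
  classical
  obtain ⟨w, hw⟩ := exists_w hW hG j y
  set m' : ∀ l : ℤ, Y.obj l →ₗ.[k] W.obj l := fun l =>
    if hl : j ≤ l then
      (if hm : Y.map (homOfLE hl) y ∈ (m l).domain then m l
       else (m l).supSpanSingleton (Y.map (homOfLE hl) y) (W.map (homOfLE hl) w) hm)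
    else m l with hm'def
  -- basic case equations
  have Eneg : ∀ l : ℤ, ¬ j ≤ l → m' l = m l := by
    intro l hl
    simp only [hm'def, dif_neg hl]
  have Emem : ∀ (l : ℤ) (hl : j ≤ l), Y.map (homOfLE hl) y ∈ (m l).domain → m' l = m l := by
    intro l hl hm
    simp only [hm'def, dif_pos hl, dif_pos hm]
  have Enmem : ∀ (l : ℤ) (hl : j ≤ l) (hm : Y.map (homOfLE hl) y ∉ (m l).domain),
      m' l = (m l).supSpanSingleton (Y.map (homOfLE hl) y) (W.map (homOfLE hl) w) hm := by
    intro l hl hm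
    simp only [hm'def, dif_pos hl, dif_neg hm]
  have hle : ∀ l : ℤ, m l ≤ m' l := by
    intro l
    by_cases hl : j ≤ l
    · by_cases hm : Y.map (homOfLE hl) y ∈ (m l).domain
      · rw [Emem l hl hm]
      · rw [Enmem l hl hm]
        exact LinearPMap.left_le_sup _ _ _
    · rw [Eneg l hl]
  have hdom : ∀ (l : ℤ) (hl : j ≤ l),
      (m' l).domain = (m l).domain ⊔ (k ∙ Y.map (homOfLE hl) y) := by
    intro l hl
    by_cases hm : Y.map (homOfLE hl) y ∈ (m l).domain
    · rw [Emem l hl hm]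
      exact (sup_eq_left.2 ((span_singleton_le_iff_mem _ _).2 hm)).symm
    · rw [Enmem l hl hm]
      exact LinearPMap.domain_supSpanSingleton _ _ _ _
  have hval : ∀ (l : ℤ) (hl : j ≤ l) (b : Y.obj l) (hb : b ∈ (m l).domain) (c : k)
      (hmem : b + c • Y.map (homOfLE hl) y ∈ (m' l).domain),
      m' l ⟨b + c • Y.map (homOfLE hl) y, hmem⟩
        = m l ⟨b, hb⟩ + c • W.map (homOfLE hl) w := by
    intro l hl b hb c hmem
    by_cases hm : Y.map (homOfLE hl) y ∈ (m l).domain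
    · have hmem' : b + c • Y.map (homOfLE hl) y ∈ (m l).domain :=
        add_mem hb (smul_mem _ c hm)
      rw [pmap_congr (Emem l hl hm) hmem hmem']
      have : (⟨b + c • Y.map (homOfLE hl) y, hmem'⟩ : (m l).domain)
          = ⟨b, hb⟩ + c • ⟨Y.map (homOfLE hl) y, hm⟩ := rfl
      rw [this, (m l).map_add, (m l).map_smul, hw l hl hm]
    · have hmem' : b + c • Y.map (homOfLE hl) y
          ∈ ((m l).supSpanSingleton (Y.map (homOfLE hl) y) (W.map (homOfLE hl) w) hm).domain := by
        rw [LinearPMap.domain_supSpanSingleton]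
        exact add_mem (mem_sup_left hb) (smul_mem _ c (mem_sup_right (mem_span_singleton_self _)))
      rw [pmap_congr (Enmem l hl hm) hmem hmem']
      exact LinearPMap.supSpanSingleton_apply_mk _ _ _ _ _ hb c
  have hdecomp : ∀ (l : ℤ) (hl : j ≤ l) (a : Y.obj l), a ∈ (m' l).domain →
      ∃ (b : Y.obj l) (_ : b ∈ (m l).domain) (c : k), a = b + c • Y.map (homOfLE hl) y := by
    intro l hl a ha
    rw [hdom l hl] at ha
    obtain ⟨b, hb, z, hz, rfl⟩ := Submodule.mem_sup.1 ha
    obtain ⟨c, rfl⟩ := Submodule.mem_span_singleton.1 hz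
    exact ⟨b, hb, c, rfl⟩
  refine ⟨m', ⟨?_, ?_, ?_, ?_⟩, hle, ?_⟩
  · intro l x
    exact (hle l).1 (hG.mem_range l x)
  · intro l x hm
    have := (hle l).2 (x := ⟨g.app l x, hG.mem_range l x⟩) (y := ⟨g.app l x, hm⟩) rfl
    rw [← this]
    exact hG.map_range l x _
  · intro l a ha
    by_cases hl : j ≤ l
    · obtain ⟨b, hb, c, rfl⟩ := hdecomp l hl a ha
      have : Y.d l (b + c • Y.map (homOfLE hl) y)
          = Y.d l b + c • Y.map (homOfLE (by omega : j ≤ l + 1)) y := by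
        rw [map_add, map_smul, d_map]
      rw [this, hdom (l+1) (by omega)]
      exact add_mem (mem_sup_left (hG.mem_step l b hb))
        (smul_mem _ c (mem_sup_right (mem_span_singleton_self _)))
    · have ham : a ∈ (m l).domain := by rw [← Eneg l hl]; exact ha
      exact (hle (l+1)).1 (hG.mem_step l a ham)
  · intro l a ha ha'
    by_cases hl : j ≤ l
    · obtain ⟨b, hb, c, rfl⟩ := hdecomp l hl a ha
      have hd : Y.d l (b + c • Y.map (homOfLE hl) y)
          = Y.d l b + c • Y.map (homOfLE (by omega : j ≤ l + 1)) y := by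
        rw [map_add, map_smul, d_map]
      have hb' : Y.d l b ∈ (m (l+1)).domain := hG.mem_step l b hb
      have ha'' : Y.d l b + c • Y.map (homOfLE (by omega : j ≤ l + 1)) y
          ∈ (m' (l+1)).domain := by rw [← hd]; exact ha'
      have e1 : (⟨Y.d l (b + c • Y.map (homOfLE hl) y), ha'⟩ : (m' (l+1)).domain)
          = ⟨Y.d l b + c • Y.map (homOfLE (by omega : j ≤ l + 1)) y, ha''⟩ := Subtype.ext hd
      rw [e1, hval (l+1) (by omega) _ hb' c ha'', hval l hl b hb c ha,
        hG.map_step l b hb hb', map_add, map_smul, d_map]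
    · have ham : a ∈ (m l).domain := by rw [← Eneg l hl]; exact ha
      have hb' : Y.d l a ∈ (m (l+1)).domain := hG.mem_step l a ham
      have h1 := (hle (l+1)).2 (x := ⟨Y.d l a, hb'⟩) (y := ⟨Y.d l a, ha'⟩) rfl
      have h2 := (hle l).2 (x := ⟨a, ham⟩) (y := ⟨a, ha⟩) rfl
      rw [← h1, ← h2, hG.map_step l a ham hb']
  · intro hcon
    apply hy
    apply (hcon j).1
    rw [hdom j le_rfl]
    refine mem_sup_right ?_
    rw [mem_span_singleton]
    exact ⟨1, by rw [one_smul]; exact map_id_apply Y j y⟩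

end SeqAux.Backward

namespace SeqAux

open Submodule

lemma injective_of_surj (W : SeqCat.{u} k) (hW : ∀ i : ℤ, Function.Surjective (W.d i)) :
    Injective W := by
  constructor
  intro X Y f g hmono
  have hg : ∀ j : ℤ, Function.Injective (g.app j) := by
    intro j
    rw [← ModuleCat.mono_iff_injective]
    infer_instance
  obtain ⟨m, hm_ge, hm_max⟩ := zorn_le_nonempty₀
    {h : ∀ j : ℤ, Y.obj j →ₗ.[k] W.obj j | Backward.Good g f h}
    (fun c hc hchain y hy =>
      (Backward.chain_ub c (fun h hh => hc hh) hchain hy).imp (fun ub h => ⟨h.1, h.2⟩))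
    (Backward.base g f hg) (Backward.good_base g f hg)
  have hGm : Backward.Good g f m := hm_max.1
  have htop : ∀ j : ℤ, (m j).domain = ⊤ := by
    intro j
    by_contra hne
    have : ∃ y, y ∉ (m j).domain := by
      by_contra h
      push_neg at h
      exact hne (eq_top_iff.2 fun y _ => h y)
    obtain ⟨y, hy⟩ := this
    obtain ⟨m', hGm', hmle, hnle⟩ := Backward.exists_gt hW hGm j y hy
    exact hnle (hm_max.2 hGm' hmle)
  have hmem : ∀ (j : ℤ) (a : Y.obj j), a ∈ (m j).domain := by
    intro j a
    rw [htop j]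
    exact Submodule.mem_top
  refine ⟨?_, ?_⟩
  · exact
    { app := fun j => ModuleCat.ofHom
        { toFun := fun a => m j ⟨a, hmem j a⟩
          map_add' := fun a b => (m j).map_add ⟨a, hmem j a⟩ ⟨b, hmem j b⟩
          map_smul' := fun c a => (m j).map_smul c ⟨a, hmem j a⟩ }
      naturality := by
        intro a b φ
        ext x
        show m b ⟨Y.map φ x, _⟩ = W.map φ (m a ⟨x, hmem a x⟩)
        exact hGm.map_iter (leOfHom φ) x (hmem a x) (hmem b _) }
  · apply NatTrans.ext
    funext j
    apply ModuleCat.hom_ext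
    apply LinearMap.ext
    intro x
    show m j ⟨g.app j x, _⟩ = f.app j x
    exact hGm.map_range j x _

end SeqAux

/-- An object `W` of the category `S` of sequences of `k`-vector spaces is an injective
object of `S` if and only if the transition map `d_W^i : W^i → W^{i+1}` is surjective for
every `i ∈ ℤ`. -/
theorem injective_iff_transitions_surjective (W : SeqCat k) :
    Injective W ↔ ∀ i : ℤ, Function.Surjective (W.d i) := by
  constructor
  · intro h i
    exact SeqAux.surj_of_injective W h i
  · intro h
    exact SeqAux.injective_of_surj W h
end

section
/- An object of S is a projective object if and only if it is a direct summand of a coproduct of objects of the form S_{n,∞} with n ∈ ℤ. -/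
open CategoryTheory CategoryTheory.Limits

set_option linter.unusedVariables false

variable {k : Type} [Field k]

variable (k)

/-- The component in degree `i` of the sequence `S_{a,b}` (for `a ∈ ℤ ∪ {−∞}`,
`b ∈ ℤ ∪ {∞}`), as a submodule of `k`: it is all of `k` if `a ≤ i ≤ b` and `0`
otherwise. -/
noncomputable def SabObj (a : WithBot ℤ) (b : WithTop ℤ) (i : ℤ) : Submodule k k :=
  if a ≤ (i : WithBot ℤ) ∧ (i : WithTop ℤ) ≤ b then ⊤ else ⊥

lemma SabObj_coe_eq_zero {a : WithBot ℤ} {b : WithTop ℤ} {i : ℤ}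
    (h : ¬ (a ≤ (i : WithBot ℤ) ∧ (i : WithTop ℤ) ≤ b)) (x : ↥(SabObj k a b i)) :
    (x : k) = 0 := by
  have hm := x.2
  have he : SabObj k a b i = ⊥ := if_neg h
  exact (Submodule.eq_bot_iff _).1 he _ hm

/-- The transition maps of the sequence `S_{a,b}`: the map from degree `i` to degree `j`
is multiplication by `∏_{m=i}^{j-1} (-1)^m`, i.e. the composite of the maps
`(-1)^m · id` for `i ≤ m < j` (and it is zero when forced to be, i.e. when the target
component vanishes). -/
noncomputable def SabMap (a : WithBot ℤ) (b : WithTop ℤ) (i j : ℤ) :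
    ↥(SabObj k a b i) →ₗ[k] ↥(SabObj k a b j) where
  toFun x := if h : a ≤ (j : WithBot ℤ) ∧ (j : WithTop ℤ) ≤ b then
      ⟨(∏ m ∈ Finset.Ico i j, (-1 : k) ^ m) * (x : k), by
        rw [SabObj, if_pos h]; trivial⟩
    else 0
  map_add' x y := by
    by_cases h : a ≤ (j : WithBot ℤ) ∧ (j : WithTop ℤ) ≤ b
    · simp only [dif_pos h]
      ext
      push_cast
      ring
    · simp only [dif_neg h, add_zero]
  map_smul' c x := by
    by_cases h : a ≤ (j : WithBot ℤ) ∧ (j : WithTop ℤ) ≤ b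
    · simp only [dif_pos h, RingHom.id_apply]
      ext
      simp [smul_eq_mul]
      ring
    · simp only [dif_neg h, smul_zero, RingHom.id_apply]

lemma SabMap_id (a : WithBot ℤ) (b : WithTop ℤ) (i : ℤ) :
    SabMap k a b i i = LinearMap.id := by
  apply LinearMap.ext
  intro x
  by_cases h : a ≤ (i : WithBot ℤ) ∧ (i : WithTop ℤ) ≤ b
  · apply Subtype.ext
    simp [SabMap, h]
  · apply Subtype.ext
    simp [SabMap, h, SabObj_coe_eq_zero k h x]

lemma SabMap_comp (a : WithBot ℤ) (b : WithTop ℤ) {i j l : ℤ}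
    (hij : i ≤ j) (hjl : j ≤ l) :
    (SabMap k a b j l).comp (SabMap k a b i j) = SabMap k a b i l := by
  apply LinearMap.ext
  intro x
  by_cases hl : a ≤ (l : WithBot ℤ) ∧ (l : WithTop ℤ) ≤ b
  · by_cases hj : a ≤ (j : WithBot ℤ) ∧ (j : WithTop ℤ) ≤ b
    · apply Subtype.ext
      simp only [LinearMap.comp_apply, SabMap, LinearMap.coe_mk, AddHom.coe_mk,
        dif_pos hl, dif_pos hj]
      have key : (∏ m ∈ Finset.Ico i j, (-1 : k) ^ m) * (∏ m ∈ Finset.Ico j l, (-1 : k) ^ m)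
          = ∏ m ∈ Finset.Ico i l, (-1 : k) ^ m := by
        rw [← Finset.prod_union (Finset.Ico_disjoint_Ico_consecutive i j l),
          Finset.Ico_union_Ico_eq_Ico hij hjl]
      rw [← key]
      ring
    · have hi : ¬ (a ≤ (i : WithBot ℤ) ∧ (i : WithTop ℤ) ≤ b) := by
        intro hi
        exact hj ⟨le_trans hi.1 (by exact_mod_cast hij),
          le_trans (by exact_mod_cast hjl) hl.2⟩
      apply Subtype.ext
      simp [SabMap, hl, hj, SabObj_coe_eq_zero k hi x]
  · apply Subtype.ext
    simp [SabMap, hl]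

/-- The sequence `S_{a,b}` for `a ∈ ℤ ∪ {−∞}` and `b ∈ ℤ ∪ {∞}`: its component in
degree `i` is `k` for `a ≤ i ≤ b` and `0` otherwise, and the transition map in degree
`i` (within the interval) is `(-1)^i · id_k`. -/
noncomputable def Sab (a : WithBot ℤ) (b : WithTop ℤ) : SeqCat k where
  obj i := ModuleCat.of k (SabObj k a b i)
  map {i j} f := ModuleCat.ofHom (SabMap k a b i j)
  map_id i := by rw [SabMap_id k a b i]; rfl
  map_comp {i j l} f g := by
    rw [← ModuleCat.ofHom_comp, SabMap_comp k a b (leOfHom f) (leOfHom g)]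

/-- The condition `a ≤ b` for `a ∈ ℤ ∪ {−∞}` and `b ∈ ℤ ∪ {∞}`: the interval `[a,b]`
contains some integer. -/
def SabLE (a : WithBot ℤ) (b : WithTop ℤ) : Prop :=
  ∃ i : ℤ, a ≤ (i : WithBot ℤ) ∧ (i : WithTop ℤ) ≤ b

section Aux

lemma sgn_mul_self (n i : ℤ) :
    (∏ m ∈ Finset.Ico n i, (-1:k)^m) * (∏ m ∈ Finset.Ico n i, (-1:k)^m) = 1 := by
  rw [← Finset.prod_mul_distrib]
  apply Finset.prod_eq_one
  intro m _
  rw [← mul_zpow, neg_mul_neg, one_mul, one_zpow]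

lemma sgn_comp {n i j : ℤ} (hni : n ≤ i) (hij : i ≤ j) :
    (∏ m ∈ Finset.Ico n i, (-1:k)^m) * (∏ m ∈ Finset.Ico i j, (-1:k)^m)
      = ∏ m ∈ Finset.Ico n j, (-1:k)^m := by
  rw [← Finset.prod_union (Finset.Ico_disjoint_Ico_consecutive n i j),
    Finset.Ico_union_Ico_eq_Ico hni hij]

lemma Sab_map_eq (a : WithBot ℤ) (b : WithTop ℤ) {i j : ℤ} (f : i ⟶ j) :
    ((Sab k a b).map f).hom = SabMap k a b i j := rfl

variable {k}

lemma seq_comp_apply {F G H : SeqCat k} (α : F ⟶ G) (β : G ⟶ H) (i : ℤ)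
    (x : F.obj i) : (α ≫ β).app i x = β.app i (α.app i x) := by
  rw [NatTrans.comp_app]; rfl

lemma nat_apply {F G : SeqCat k} (τ : F ⟶ G) {i j : ℤ} (f : i ⟶ j) (x : F.obj i) :
    τ.app j (F.map f x) = G.map f (τ.app i x) := by
  have := congrArg (fun φ : F.obj i ⟶ G.obj j => φ x) (τ.naturality f)
  exact this

lemma sabCond {n i : ℤ} (h : n ≤ i) :
    ((n : WithBot ℤ) ≤ (i : WithBot ℤ) ∧ (i : WithTop ℤ) ≤ (⊤ : WithTop ℤ)) :=
  ⟨by exact_mod_cast h, le_top⟩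

lemma sabNotCond {n i : ℤ} (h : ¬ n ≤ i) :
    ¬ ((n : WithBot ℤ) ≤ (i : WithBot ℤ) ∧ (i : WithTop ℤ) ≤ (⊤ : WithTop ℤ)) := by
  intro hc
  exact h (by exact_mod_cast hc.1)

/-- The generator of `S_{n,∞}` in degree `n`. -/
def SabGen (n : ℤ) : ↑((Sab k (n : WithBot ℤ) (⊤ : WithTop ℤ)).obj n) :=
  ⟨1, by rw [SabObj, if_pos (sabCond (le_refl n))]; trivial⟩

lemma Sab_map_val {n i j : ℤ} (hj : n ≤ j)
    (x : ↥(SabObj k (n : WithBot ℤ) (⊤ : WithTop ℤ) i)) :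
    ((SabMap k (n : WithBot ℤ) (⊤ : WithTop ℤ) i j x : k))
      = (∏ m ∈ Finset.Ico i j, (-1:k)^m) * (x : k) := by
  simp only [SabMap, LinearMap.coe_mk, AddHom.coe_mk, dif_pos (sabCond hj)]

noncomputable def toSeqApp (W : SeqCat k) (n : ℤ) (w : W.obj n) (i : ℤ) :
    ↥(SabObj k (n : WithBot ℤ) (⊤ : WithTop ℤ) i) →ₗ[k] ↑(W.obj i) :=
  if h : n ≤ i then
      (LinearMap.toSpanSingleton k (W.obj i)
        ((∏ m ∈ Finset.Ico n i, (-1:k)^m) • W.map (homOfLE h) w)).comp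
        (SabObj k (n : WithBot ℤ) (⊤ : WithTop ℤ) i).subtype
    else 0

/-- The morphism `S_{n,∞} ⟶ W` sending the generator in degree `n` to `w`. -/
noncomputable def toSeq (W : SeqCat k) (n : ℤ) (w : W.obj n) :
    Sab k (n : WithBot ℤ) (⊤ : WithTop ℤ) ⟶ W where
  app i :=
    ModuleCat.ofHom (toSeqApp W n w i)
  naturality {i j} f := by
    have hij : i ≤ j := leOfHom f
    apply ModuleCat.hom_ext
    refine LinearMap.ext
      fun (x : ↥(SabObj k (n : WithBot ℤ) (⊤ : WithTop ℤ) i)) => ?_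
    show toSeqApp W n w j (SabMap k (n : WithBot ℤ) (⊤ : WithTop ℤ) i j x)
      = (W.map f).hom (toSeqApp W n w i x)
    unfold toSeqApp
    by_cases hi : n ≤ i
    · have hj : n ≤ j := le_trans hi hij
      rw [dif_pos hi, dif_pos hj]
      simp only [id_eq, ModuleCat.hom_ofHom, LinearMap.comp_apply, Submodule.subtype_apply,
        LinearMap.toSpanSingleton_apply]
      erw [Sab_map_val hj]
      have hW : W.map (homOfLE hj) w = W.map f (W.map (homOfLE hi) w) := by
        have := congrArg (fun φ : W.obj n ⟶ W.obj j => φ w) (W.map_comp (homOfLE hi) f)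
        exact this
      rw [hW, map_smul, map_smul, smul_smul, smul_smul]
      congr 1
      calc (∏ m ∈ Finset.Ico i j, (-1:k)^m) * (x:k) * ∏ m ∈ Finset.Ico n j, (-1:k)^m
          = ((∏ m ∈ Finset.Ico n i, (-1:k)^m) * ((∏ m ∈ Finset.Ico i j, (-1:k)^m)
              * (∏ m ∈ Finset.Ico i j, (-1:k)^m))) * (x:k) := by
            rw [← sgn_comp (k := k) hi hij]; ring
        _ = (x:k) * ((∏ m ∈ Finset.Ico n i, (-1:k)^m)) := by
            rw [sgn_mul_self, mul_one]; ring
    · have hx : (x : k) = 0 := SabObj_coe_eq_zero k (sabNotCond hi) x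
      rw [dif_neg hi, LinearMap.zero_apply, map_zero]
      by_cases hj : n ≤ j
      · rw [dif_pos hj]
        simp only [id_eq, ModuleCat.hom_ofHom, LinearMap.comp_apply, Submodule.subtype_apply,
          LinearMap.toSpanSingleton_apply]
        erw [Sab_map_val hj]
        rw [hx, mul_zero, zero_smul]
      · rw [dif_neg hj, LinearMap.zero_apply]

lemma toSeq_app {W : SeqCat k} {n i : ℤ} (w : W.obj n) (h : n ≤ i)
    (x : ↥(SabObj k (n : WithBot ℤ) (⊤ : WithTop ℤ) i)) :
    (toSeq W n w).app i x
      = ((x : k) * ∏ m ∈ Finset.Ico n i, (-1:k)^m) • W.map (homOfLE h) w := by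
  show toSeqApp W n w i x = _
  unfold toSeqApp
  rw [dif_pos h]
  simp only [LinearMap.comp_apply, Submodule.subtype_apply, LinearMap.toSpanSingleton_apply]
  rw [smul_smul, mul_comm]

lemma toSeq_app_gen {W : SeqCat k} {n : ℤ} (w : W.obj n) :
    (toSeq W n w).app n (SabGen n) = w := by
  erw [toSeq_app w (le_refl n)]
  have h1 : @Subtype.val k (fun y => y ∈ SabObj k (n : WithBot ℤ) (⊤ : WithTop ℤ) n) (SabGen n) = 1 := rfl
  rw [h1]
  simp only [Finset.Ico_self, Finset.prod_empty, mul_one, one_smul]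
  have h2 : W.map (homOfLE (le_refl n)) = 𝟙 (W.obj n) := by
    rw [← W.map_id]
    rfl
  rw [h2]
  rfl

lemma Sab_hom_ext {W : SeqCat k} {n : ℤ}
    (f g : Sab k (n : WithBot ℤ) (⊤ : WithTop ℤ) ⟶ W)
    (h : f.app n (SabGen n) = g.app n (SabGen n)) : f = g := by
  apply NatTrans.ext
  funext i
  refine ConcreteCategory.hom_ext _ _
    fun (x : ↥(SabObj k (n : WithBot ℤ) (⊤ : WithTop ℤ) i)) => ?_
  by_cases hi : n ≤ i
  · have hx : x = (Sab k (n : WithBot ℤ) (⊤ : WithTop ℤ)).map (homOfLE hi)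
        (((x : k) * ∏ m ∈ Finset.Ico n i, (-1:k)^m) • SabGen n) := by
      apply Subtype.ext
      rw [map_smul]
      show (x : k) = ((x : k) * ∏ m ∈ Finset.Ico n i, (-1:k)^m) •
        ((SabMap k (n : WithBot ℤ) (⊤ : WithTop ℤ) n i (SabGen n) : k))
      erw [Sab_map_val hi, smul_eq_mul]
      have h1 : @Subtype.val k (fun y => y ∈ SabObj k (n : WithBot ℤ) (⊤ : WithTop ℤ) n) (SabGen n) = 1 := rfl
      rw [h1, mul_one, mul_assoc, sgn_mul_self, mul_one]
    rw [hx, nat_apply f (homOfLE hi), nat_apply g (homOfLE hi), map_smul,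
      map_smul, h, map_smul, map_smul]
  · have hx : x = 0 := Subtype.ext (SabObj_coe_eq_zero k (sabNotCond hi) x)
    subst hx
    exact (map_zero _).trans (map_zero _).symm

instance Sab_projective (n : ℤ) :
    Projective (Sab k (n : WithBot ℤ) (⊤ : WithTop ℤ)) where
  factors {E X} f e he := by
    have h1 : Epi (e.app n) := by rw [NatTrans.epi_iff_epi_app] at he; exact he n
    obtain ⟨x, hx⟩ := (ModuleCat.epi_iff_surjective _).1 h1 (f.app n (SabGen n))
    refine ⟨toSeq E n x, Sab_hom_ext _ _ ?_⟩
    rw [seq_comp_apply, toSeq_app_gen, hx]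

end Aux

/-- An object of `S` is a projective object if and only if it is a direct summand of a
coproduct of objects of the form `S_{n,∞}` with `n ∈ ℤ`. -/
theorem projective_iff_summand_of_coproduct_of_Sninfty (V : SeqCat k) :
    Projective V ↔
      ∃ (ι : Type) (n : ι → ℤ)
        (s : V ⟶ ∐ fun j : ι => Sab k (n j : WithBot ℤ) (⊤ : WithTop ℤ))
        (r : (∐ fun j : ι => Sab k (n j : WithBot ℤ) (⊤ : WithTop ℤ)) ⟶ V),
        s ≫ r = 𝟙 V := by
  constructor
  · intro hV
    let ι : Type := Σ n : ℤ, V.obj n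
    let nn : ι → ℤ := fun j => j.1
    let r : (∐ fun j : ι => Sab k (nn j : WithBot ℤ) (⊤ : WithTop ℤ)) ⟶ V :=
      Sigma.desc fun j => toSeq V j.1 j.2
    have hepi : Epi r := by
      rw [NatTrans.epi_iff_epi_app]
      intro i
      rw [ModuleCat.epi_iff_surjective]
      intro v
      refine ⟨(Sigma.ι (fun j : ι => Sab k (nn j : WithBot ℤ) (⊤ : WithTop ℤ))
        ⟨i, v⟩).app i (SabGen i), ?_⟩
      have h1 : Sigma.ι (fun j : ι => Sab k (nn j : WithBot ℤ) (⊤ : WithTop ℤ)) ⟨i, v⟩ ≫ r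
          = toSeq V i v := Sigma.ι_desc _ _
      rw [← seq_comp_apply, h1, toSeq_app_gen]
    exact ⟨ι, nn, Projective.factorThru (𝟙 V) r, r, Projective.factorThru_comp _ _⟩
  · rintro ⟨ι, n, s, r, hsr⟩
    constructor
    intro E X f e he
    obtain ⟨g, hg⟩ : ∃ g, g ≫ e = r ≫ f := by
      refine ⟨Sigma.desc fun j => Projective.factorThru
        (Sigma.ι (fun j : ι => Sab k (n j : WithBot ℤ) (⊤ : WithTop ℤ)) j ≫ r ≫ f) e, ?_⟩
      ext j
      simp [Projective.factorThru_comp]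
    exact ⟨s ≫ g, by rw [Category.assoc, hg, ← Category.assoc, hsr, Category.id_comp]⟩
end
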